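/- Let V = {1, 2, …, N} with N ≥ 4 and let E be the set of all circular intervals of {1, …, N}. Then a linear ordering π of V is an ABAB-free ordering of the hypergraph H = (V, E) if and only if π is equivalent to the increasing order 1, 2, …, N (i.e., obtainable from it by cyclic shifts, or by reversal followed by cyclic shifts). -/

import Mathlib

/-- `π` is a linear ordering of the vertex set `Vs`: a duplicate-free list
consisting of exactly the elements of `Vs`. -/
def IsOrderingOf {α : Type*} (Vs : Set α) (π : List α) : Prop :=
  π.Nodup ∧ ∀ v, v ∈ π ↔ v ∈ Vs

/-- The sets `A`, `B` form an alternating pattern of length `n` with respect to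
the ordering `π`: there are `n` vertices occurring in this order in `π`, those
at even positions belonging to `A \ B` and those at odd positions to `B \ A`.
For `n = 2k` this is an `(AB)^k` pattern; for `n = 2k+1` it is an `(AB)^k A`
pattern (so `n = 4` gives `ABAB` and `n = 5` gives `ABABA`). -/
def FormPattern {α : Type*} (n : ℕ) (A B : Set α) (π : List α) : Prop :=
  ∃ w : List α, w.Sublist π ∧ w.length = n ∧
    ∀ (i : ℕ) (h : i < w.length),
      (i % 2 = 0 → w[i]'h ∈ A \ B) ∧ (i % 2 = 1 → w[i]'h ∈ B \ A)

/-- `π` is a pattern-free ordering for the edge set `E`: no pair of edges forms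
an alternating pattern of length `n` with respect to `π`. -/
def FreeOrdering {α : Type*} (n : ℕ) (E : Set (Set α)) (π : List α) : Prop :=
  ∀ A ∈ E, ∀ B ∈ E, ¬ FormPattern n A B π

/-- Two orderings are equivalent if one is obtained from the other by cyclic
shifts, or by reversing the order and then applying cyclic shifts. -/
def EquivOrderings {α : Type*} (π₁ π₂ : List α) : Prop :=
  (∃ m, π₂ = π₁.rotate m) ∨ (∃ m, π₂ = π₁.reverse.rotate m)

/-- `S` is a circular interval of `{1, …, N}`: a set of consecutive integers,
or the union of two intervals, one containing `1` and the other containing `N`. -/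
def IsCircularInterval (N : ℕ) (S : Set ℕ) : Prop :=
  S ⊆ Set.Icc 1 N ∧
    ((∃ a b, S = Set.Icc a b) ∨ (∃ a b, S = Set.Icc 1 a ∪ Set.Icc b N))

lemma mod2' {a N : ℕ} (h : a < 2 * N) :
    a % N = if a < N then a else a - N := by
  split_ifs with h'
  · exact Nat.mod_eq_of_lt h'
  · rw [Nat.mod_eq_sub_mod (by omega), Nat.mod_eq_of_lt (by omega)]

lemma core_circ {N : ℕ} {A B : Set ℕ} (hA : IsCircularInterval N A) (hB : IsCircularInterval N B)
    {a b c d : ℕ} (hab : a < b) (hbc : b < c) (hcd : c < d)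
    (ha : a ∈ A \ B) (hb : b ∈ B \ A) (hc : c ∈ A \ B) (hd : d ∈ B \ A) : False := by
  have haN : a ∈ Set.Icc 1 N := hA.1 ha.1
  have hbN : b ∈ Set.Icc 1 N := hB.1 hb.1
  have hcN : c ∈ Set.Icc 1 N := hA.1 hc.1
  have hdN : d ∈ Set.Icc 1 N := hB.1 hd.1
  simp only [Set.mem_Icc] at haN hbN hcN hdN
  obtain ⟨ha1, ha2⟩ := ha
  obtain ⟨hb1, hb2⟩ := hb
  obtain ⟨hc1, hc2⟩ := hc
  obtain ⟨hd1, hd2⟩ := hd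
  rcases hA.2 with ⟨p, q, rfl⟩ | ⟨p, q, rfl⟩ <;>
    rcases hB.2 with ⟨r, s, rfl⟩ | ⟨r, s, rfl⟩ <;>
      simp only [Set.mem_Icc, Set.mem_union] at ha1 ha2 hb1 hb2 hc1 hc2 hd1 hd2 <;> omega

lemma quad_of_formPattern {A B : Set ℕ} {π : List ℕ} (h : FormPattern 4 A B π) :
    ∃ a b c d, [a,b,c,d].Sublist π ∧ a ∈ A \ B ∧ b ∈ B \ A ∧ c ∈ A \ B ∧ d ∈ B \ A := by
  obtain ⟨w, hsub, hlen, hw⟩ := h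
  obtain ⟨a, b, c, d, rfl⟩ : ∃ a b c d, w = [a, b, c, d] := by
    rcases w with _ | ⟨a, _ | ⟨b, _ | ⟨c, _ | ⟨d, _ | ⟨e, t⟩⟩⟩⟩⟩ <;>
      simp only [List.length_cons, List.length_nil] at hlen <;>
      first
        | exact ⟨a, b, c, d, rfl⟩
        | omega
  exact ⟨a, b, c, d, hsub, (hw 0 (by norm_num)).1 rfl, (hw 1 (by norm_num)).2 rfl,
    (hw 2 (by norm_num)).1 rfl, (hw 3 (by norm_num)).2 rfl⟩

lemma formPattern_of_quad {A B : Set ℕ} {π : List ℕ} {a b c d : ℕ}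
    (hsub : [a,b,c,d].Sublist π) (ha : a ∈ A \ B) (hb : b ∈ B \ A)
    (hc : c ∈ A \ B) (hd : d ∈ B \ A) : FormPattern 4 A B π := by
  refine ⟨[a,b,c,d], hsub, rfl, ?_⟩
  intro i h
  simp only [List.length_cons, List.length_nil] at h
  interval_cases i
  · exact ⟨fun _ => ha, fun h => by omega⟩
  · exact ⟨fun h => by omega, fun _ => hb⟩
  · exact ⟨fun _ => hc, fun h => by omega⟩
  · exact ⟨fun h => by omega, fun _ => hd⟩

lemma quad_sublist {π : List ℕ} {p0 p1 p2 p3 : ℕ} (h01 : p0 < p1) (h12 : p1 < p2)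
    (h23 : p2 < p3) (h3 : p3 < π.length) :
    [π[p0]'(by omega), π[p1]'(by omega), π[p2]'(by omega), π[p3]'h3].Sublist π := by
  have h := List.map_getElem_sublist (l := π)
    (is := [⟨p0, by omega⟩, ⟨p1, by omega⟩, ⟨p2, by omega⟩, ⟨p3, h3⟩]) ?_
  · simpa using h
  · refine List.Pairwise.cons ?_ (List.Pairwise.cons ?_ (List.Pairwise.cons ?_ (List.Pairwise.cons ?_ List.Pairwise.nil)))
    all_goals
      intro y hy
      fin_cases hy <;> exact Fin.mk_lt_mk.mpr (by omega)

lemma cyclic4 {N m a b c d : ℕ} (h : [a,b,c,d].Sublist ((List.range' 1 N).rotate m)) :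
    (a<b ∧ b<c ∧ c<d) ∨ (b<c ∧ c<d ∧ d<a) ∨ (c<d ∧ d<a ∧ a<b) ∨ (d<a ∧ a<b ∧ b<c) := by
  have hN : 0 < N := by
    by_contra hN'
    have hle := h.length_le
    simp [show N = 0 by omega] at hle
  have hm'N : m % N < N := Nat.mod_lt _ hN
  set m' := m % N with hm'
  have hsplit : List.range' 1 m' ++ List.range' (1 + m') (N - m') = List.range' 1 N := by
    have h2 := List.range'_append (s := 1) (m := m') (n := N - m') (step := 1)
    rw [show m' + (N - m') = N from by omega] at h2
    simpa using h2
  have hrot : (List.range' 1 N).rotate m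
      = List.range' (1 + m') (N - m') ++ List.range' 1 m' := by
    rw [← List.rotate_mod]
    simp only [List.length_range']
    rw [← hm',
      List.rotate_eq_drop_append_take (by rw [List.length_range']; omega)]
    congr 1
    · rw [← hsplit, List.drop_left' (by simp)]
    · rw [← hsplit, List.take_left' (by simp)]
  rw [hrot, List.sublist_append_iff] at h
  obtain ⟨u, v, huv, hu, hv⟩ := h
  have pu : u.Pairwise (· < ·) := (List.pairwise_lt_range' 1).sublist hu
  have pv : v.Pairwise (· < ·) := (List.pairwise_lt_range' 1).sublist hv
  have hum : ∀ x ∈ u, 1 + m' ≤ x ∧ x < 1 + m' + (N - m') :=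
    fun x hx => List.mem_range'_1.mp (hu.subset hx)
  have hvm : ∀ x ∈ v, 1 ≤ x ∧ x < 1 + m' :=
    fun x hx => List.mem_range'_1.mp (hv.subset hx)
  rcases u with _ | ⟨x1, _ | ⟨x2, _ | ⟨x3, _ | ⟨x4, _ | ⟨x5, r⟩⟩⟩⟩⟩
  · simp only [List.nil_append] at huv
    subst huv
    simp only [List.pairwise_cons, List.mem_cons, List.mem_singleton, List.not_mem_nil] at pv
    left; refine ⟨?_, ?_, ?_⟩ <;> simp_all
  · simp only [List.cons_append, List.nil_append, List.cons.injEq] at huv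
    obtain ⟨rfl, huv⟩ := huv
    subst huv
    simp only [List.pairwise_cons, List.mem_cons, List.mem_singleton, List.not_mem_nil] at pv
    have hva := hum a (by simp)
    have hvb := hvm b (by simp)
    have hvd := hvm d (by simp)
    right; left
    refine ⟨by simp_all, by simp_all, by omega⟩
  · simp only [List.cons_append, List.nil_append, List.cons.injEq] at huv
    obtain ⟨rfl, rfl, huv⟩ := huv
    subst huv
    simp only [List.pairwise_cons, List.mem_cons, List.mem_singleton, List.not_mem_nil] at pv pu
    have hva := hum a (by simp)
    have hvc := hvm c (by simp)
    have hvd := hvm d (by simp)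
    right; right; left
    refine ⟨by simp_all, by omega, by simp_all⟩
  · simp only [List.cons_append, List.nil_append, List.cons.injEq] at huv
    obtain ⟨rfl, rfl, rfl, huv⟩ := huv
    subst huv
    simp only [List.pairwise_cons, List.mem_cons, List.mem_singleton, List.not_mem_nil] at pu
    have hva := hum a (by simp)
    have hvd := hvm d (by simp)
    right; right; right
    refine ⟨by omega, by simp_all, by simp_all⟩
  · simp only [List.cons_append, List.nil_append, List.cons.injEq] at huv
    obtain ⟨rfl, rfl, rfl, rfl, huv⟩ := huv
    simp only [List.pairwise_cons, List.mem_cons, List.mem_singleton, List.not_mem_nil] at pu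
    left; refine ⟨?_, ?_, ?_⟩ <;> simp_all
  · exfalso
    have h4 := congrArg List.length huv
    simp only [List.length_cons, List.length_append, List.length_nil] at h4
    omega

def csN (N i : ℕ) : ℕ := if i + 1 = N then 0 else i + 1
def Ffun (N i0 v : ℕ) : ℕ := if i0 + (v - 1) < N then i0 + (v - 1) else i0 + (v - 1) - N
def Gfun (N i0 v : ℕ) : ℕ := if v - 1 ≤ i0 then i0 - (v - 1) else i0 + N - (v - 1)

lemma csN_inj {N i j : ℕ} (hi : i < N) (hj : j < N) (h : csN N i = csN N j) : i = j := by
  unfold csN at h; split_ifs at h <;> omega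

lemma Ffun_lt {N i0 v : ℕ} (h : i0 < N) (hv : v ≤ N) : Ffun N i0 v < N := by
  unfold Ffun; split_ifs <;> omega

lemma Ffun_one {N i0 : ℕ} (h : i0 < N) : Ffun N i0 1 = i0 := by
  unfold Ffun; split_ifs <;> omega

lemma Ffun_step {N i0 v : ℕ} (h : i0 < N) (h1 : 1 ≤ v) (h2 : v ≤ N) :
    Ffun N i0 (v + 1) = csN N (Ffun N i0 v) := by
  unfold Ffun csN; split_ifs <;> omega

lemma Gfun_one {N i0 : ℕ} : Gfun N i0 1 = i0 := by
  unfold Gfun; split_ifs <;> omega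

lemma Gfun_lt {N i0 v : ℕ} (h : i0 < N) (h1 : 1 ≤ v) (h2 : v ≤ N) : Gfun N i0 v < N := by
  unfold Gfun; split_ifs <;> omega

lemma Gfun_step {N i0 v : ℕ} (h : i0 < N) (h1 : 1 ≤ v) (h2 : v + 1 ≤ N) :
    csN N (Gfun N i0 (v + 1)) = Gfun N i0 v := by
  unfold Gfun csN; split_ifs <;> omega

lemma adj_aux {N : ℕ} (hN : 4 ≤ N) {π : List ℕ} (hnd : π.Nodup) (hlen : π.length = N)
    (hmem : ∀ x, x ∈ π ↔ 1 ≤ x ∧ x ≤ N)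
    (hfree : FreeOrdering 4 {S | IsCircularInterval N S} π)
    {A B : Set ℕ} (hA : IsCircularInterval N A) (hB : IsCircularInterval N B)
    {v v' : ℕ}
    (hclsA : ∀ x, 1 ≤ x → x ≤ N → x = v ∨ x = v' → x ∈ A \ B)
    (hclsB : ∀ x, 1 ≤ x → x ≤ N → x ≠ v → x ≠ v' → x ∈ B \ A)
    (hvm : v ∈ π) (hvm' : v' ∈ π)
    (hlt : List.idxOf v π < List.idxOf v' π) :
    List.idxOf v' π = List.idxOf v π + 1 ∨
      (List.idxOf v π = 0 ∧ List.idxOf v' π = N - 1) := by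
  by_contra hcon
  push_neg at hcon
  have hiN : List.idxOf v π < N := hlen ▸ List.idxOf_lt_length_iff.mpr hvm
  have hjN : List.idxOf v' π < N := hlen ▸ List.idxOf_lt_length_iff.mpr hvm'
  set i := List.idxOf v π with hi
  set j := List.idxOf v' π with hj
  have hij : i + 1 < j := by
    rcases Nat.lt_or_ge (i + 1) j with h | h
    · exact h
    · exfalso; exact hcon.1 (by omega)
  have hgv : π[i]'(by omega) = v := List.getElem_idxOf (by omega)
  have hgv' : π[j]'(by omega) = v' := List.getElem_idxOf (by omega)
  have hidxget : ∀ p (hp : p < π.length), List.idxOf (π[p]'hp) π = p := by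
    intro p hp
    have h1 : List.idxOf (π[p]'hp) π < π.length :=
      List.idxOf_lt_length_iff.mpr (List.getElem_mem hp)
    exact (hnd.getElem_inj_iff).mp (List.getElem_idxOf h1)
  have hother : ∀ p (hp : p < π.length), p ≠ i → p ≠ j → π[p]'hp ∈ B \ A := by
    intro p hp hpi hpj
    have hm := (hmem _).mp (List.getElem_mem hp)
    refine hclsB _ hm.1 hm.2 ?_ ?_
    · intro he; exact hpi (by rw [← hidxget p hp, he, ← hi])
    · intro he; exact hpj (by rw [← hidxget p hp, he, ← hj])
  have hvAB : v ∈ A \ B := hclsA v ((hmem v).mp hvm).1 ((hmem v).mp hvm).2 (Or.inl rfl)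
  have hv'AB : v' ∈ A \ B := hclsA v' ((hmem v').mp hvm').1 ((hmem v').mp hvm').2 (Or.inr rfl)
  rcases Nat.lt_or_ge (j + 1) N with hcase | hcase
  · -- positions i < i+1 < j < j+1
    have hsub := quad_sublist (π := π) (p0 := i) (p1 := i+1) (p2 := j) (p3 := j+1)
      (by omega) (by omega) (by omega) (by omega)
    refine hfree A hA B hB (formPattern_of_quad hsub ?_ ?_ ?_ ?_)
    · rw [hgv]; exact hvAB
    · exact hother (i+1) (by omega) (by omega) (by omega)
    · rw [hgv']; exact hv'AB
    · exact hother (j+1) (by omega) (by omega) (by omega)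
  · -- j = N - 1, so i ≥ 1; positions i-1 < i < i+1 < j
    have hi1 : 1 ≤ i := by
      rcases Nat.eq_zero_or_pos i with h0 | h0
      · exfalso; exact hcon.2 h0 (by omega)
      · omega
    have hsub := quad_sublist (π := π) (p0 := i-1) (p1 := i) (p2 := i+1) (p3 := j)
      (by omega) (by omega) (by omega) (by omega)
    refine hfree B hB A hA (formPattern_of_quad hsub ?_ ?_ ?_ ?_)
    · exact hother (i-1) (by omega) (by omega) (by omega)
    · rw [show π[i]'(by omega) = v from List.getElem_idxOf (by omega)]; exact hvAB
    · exact hother (i+1) (by omega) (by omega) (by omega)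
    · rw [hgv']; exact hv'AB

/-- **Lemma (intervals).** Let `V = {1, …, N}` with `N ≥ 4` and let `E` be the
set of all circular intervals of `{1, …, N}`. Then an ordering `π` of `V` is an
`ABAB`-free ordering of the hypergraph `(V, E)` if and only if `π` is
equivalent to the increasing order `1, 2, …, N`. -/
theorem circular_intervals_ABAB_free_iff (N : ℕ) (hN : 4 ≤ N) (π : List ℕ)
    (hπ : IsOrderingOf (Set.Icc 1 N) π) :
    FreeOrdering 4 {S | IsCircularInterval N S} π ↔
      EquivOrderings (List.range' 1 N) π := by
  have hnd := hπ.1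
  have hmem : ∀ x, x ∈ π ↔ 1 ≤ x ∧ x ≤ N := by
    intro x; rw [hπ.2 x, Set.mem_Icc]
  have hlen : π.length = N := by
    have h1 : π.toFinset = Finset.Icc 1 N := by
      ext x
      simp only [List.mem_toFinset, Finset.mem_Icc, hmem x]
    calc π.length = π.toFinset.card := (List.toFinset_card_of_nodup hnd).symm
      _ = N := by rw [h1, Nat.card_Icc]; omega
  constructor
  · -- hard direction
    intro hfree
    have hmem' : ∀ v, 1 ≤ v → v ≤ N → v ∈ π := fun v h1 h2 => (hmem v).mpr ⟨h1, h2⟩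
    have hidxlt : ∀ v, 1 ≤ v → v ≤ N → List.idxOf v π < N :=
      fun v h1 h2 => hlen ▸ List.idxOf_lt_length_iff.mpr (hmem' v h1 h2)
    have hget : ∀ v (hv1 : 1 ≤ v) (hv2 : v ≤ N),
        π[List.idxOf v π]'(by rw [hlen]; exact hidxlt v hv1 hv2) = v :=
      fun v hv1 hv2 => List.getElem_idxOf _
    have hinj : ∀ v w, 1 ≤ v → v ≤ N → 1 ≤ w → w ≤ N →
        List.idxOf v π = List.idxOf w π → v = w := by
      intro v w h1 h2 h3 h4 he
      have hv := hget v h1 h2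
      have hw := hget w h3 h4
      simp only [he] at hv
      exact hv.symm.trans hw
    set i0 := List.idxOf 1 π with hi0
    have hi0lt : i0 < N := hidxlt 1 (by omega) (by omega)
    -- adjacency in cyclic-successor form
    have hadj' : ∀ v, 1 ≤ v → v + 1 ≤ N →
        List.idxOf (v+1) π = csN N (List.idxOf v π) ∨
        List.idxOf v π = csN N (List.idxOf (v+1) π) := by
      intro v h1 h2
      have hA : IsCircularInterval N (Set.Icc v (v+1)) := by
        constructor
        · intro x hx; simp only [Set.mem_Icc] at *; omega
        · exact Or.inl ⟨v, v+1, rfl⟩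
      have hB : IsCircularInterval N (Set.Icc 1 (v-1) ∪ Set.Icc (v+2) N) := by
        constructor
        · intro x hx; simp only [Set.mem_Icc, Set.mem_union] at *; omega
        · exact Or.inr ⟨v-1, v+2, rfl⟩
      have hclsA : ∀ x, 1 ≤ x → x ≤ N → x = v ∨ x = v + 1 →
          x ∈ Set.Icc v (v+1) \ (Set.Icc 1 (v-1) ∪ Set.Icc (v+2) N) := by
        intro x hx1 hx2 hx
        simp only [Set.mem_diff, Set.mem_Icc, Set.mem_union, not_or, not_and, not_le]
        omega
      have hclsB : ∀ x, 1 ≤ x → x ≤ N → x ≠ v → x ≠ v + 1 →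
          x ∈ (Set.Icc 1 (v-1) ∪ Set.Icc (v+2) N) \ Set.Icc v (v+1) := by
        intro x hx1 hx2 hx3 hx4
        simp only [Set.mem_diff, Set.mem_Icc, Set.mem_union, not_and, not_le]
        omega
      have hvm : v ∈ π := hmem' v h1 (by omega)
      have hvm' : (v+1) ∈ π := hmem' (v+1) (by omega) h2
      have hvlt := hidxlt v h1 (by omega)
      have hv'lt := hidxlt (v+1) (by omega) h2
      have hne : List.idxOf v π ≠ List.idxOf (v+1) π := by
        intro he
        have := hinj v (v+1) h1 (by omega) (by omega) h2 he
        omega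
      rcases Nat.lt_or_ge (List.idxOf v π) (List.idxOf (v+1) π) with h | h
      · rcases adj_aux hN hnd hlen hmem hfree hA hB hclsA hclsB hvm hvm' h with h' | h'
        · left; unfold csN; split_ifs <;> omega
        · right; unfold csN; split_ifs <;> omega
      · have h' : List.idxOf (v+1) π < List.idxOf v π := by omega
        rcases adj_aux hN hnd hlen hmem hfree hA hB
            (fun x a b c => hclsA x a b c.symm) (fun x a b c d => hclsB x a b d c)
            hvm' hvm h' with h'' | h''
        · right; unfold csN; split_ifs <;> omega
        · left; unfold csN; split_ifs <;> omega
    rcases hadj' 1 (by omega) (by omega) with hdir | hdir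
    · -- increasing direction
      left
      have key : ∀ v, 1 ≤ v → v + 1 ≤ N →
          List.idxOf v π = Ffun N i0 v ∧ List.idxOf (v+1) π = Ffun N i0 (v+1) := by
        intro v
        induction v with
        | zero => omega
        | succ n ih =>
          intro h1 h2
          rcases Nat.eq_zero_or_pos n with hn | hn
          · subst hn
            have hF1 : Ffun N i0 1 = i0 := Ffun_one hi0lt
            refine ⟨by rw [hF1, hi0], ?_⟩
            rw [Ffun_step hi0lt (by omega) (by omega), hF1]
            exact hdir
          · obtain ⟨ih1, ih2⟩ := ih (by omega) (by omega)
            refine ⟨ih2, ?_⟩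
            rcases hadj' (n+1) (by omega) (by omega) with h | h
            · rw [h, ih2]
              exact (Ffun_step hi0lt (v := n+1) (by omega) (by omega)).symm
            · exfalso
              have e2 : List.idxOf (n+1) π = csN N (List.idxOf n π) := by
                rw [ih1, ih2, Ffun_step hi0lt (by omega) (by omega)]
              have e3 : csN N (List.idxOf (n+2) π) = csN N (List.idxOf n π) := by
                rw [← h, e2]
              have e4 := csN_inj (hidxlt (n+2) (by omega) (by omega))
                (hidxlt n (by omega) (by omega)) e3
              have := hinj (n+2) n (by omega) (by omega) (by omega) (by omega) e4
              omega
      have keyall : ∀ v, 1 ≤ v → v ≤ N → List.idxOf v π = Ffun N i0 v := by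
        intro v h1 h2
        rcases Nat.lt_or_ge v N with h | h
        · exact (key v h1 (by omega)).1
        · obtain ⟨w, rfl⟩ : ∃ w, v = w + 1 := ⟨v - 1, by omega⟩
          exact (key w (by omega) (by omega)).2
      refine ⟨N - i0, ?_⟩
      apply List.ext_getElem (by simp [hlen])
      intro p h1 h2
      have hpN : p < N := by omega
      set v := if i0 ≤ p then p - i0 + 1 else p + N - i0 + 1 with hv
      have hv1 : 1 ≤ v := by rw [hv]; split_ifs <;> omega
      have hv2 : v ≤ N := by rw [hv]; split_ifs <;> omega
      have hFv : Ffun N i0 v = p := by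
        rw [hv]; unfold Ffun; split_ifs <;> omega
      have hidxv : List.idxOf v π = p := by rw [keyall v hv1 hv2, hFv]
      have hgetp : π[p]'h1 = v := by
        have hg := hget v hv1 hv2
        simp only [hidxv] at hg
        exact hg
      rw [hgetp, List.getElem_rotate]
      simp only [List.length_range']
      rw [List.getElem_range']
      have hm := mod2' (a := p + (N - i0)) (N := N) (by omega)
      rw [hm, hv]
      split_ifs <;> omega
    · -- decreasing direction
      right
      have hdir2 : List.idxOf 2 π = Gfun N i0 2 := by
        have e1 : csN N (Gfun N i0 2) = Gfun N i0 1 := Gfun_step hi0lt (by omega) (by omega)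
        rw [Gfun_one] at e1
        have e2 : csN N (List.idxOf 2 π) = csN N (Gfun N i0 2) := by
          rw [e1, ← hdir]
        exact csN_inj (hidxlt 2 (by omega) (by omega))
          (Gfun_lt hi0lt (by omega) (by omega)) e2
      have key : ∀ v, 1 ≤ v → v + 1 ≤ N →
          List.idxOf v π = Gfun N i0 v ∧ List.idxOf (v+1) π = Gfun N i0 (v+1) := by
        intro v
        induction v with
        | zero => omega
        | succ n ih =>
          intro h1 h2
          rcases Nat.eq_zero_or_pos n with hn | hn
          · subst hn
            exact ⟨by rw [Gfun_one, hi0], hdir2⟩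
          · obtain ⟨ih1, ih2⟩ := ih (by omega) (by omega)
            refine ⟨ih2, ?_⟩
            rcases hadj' (n+1) (by omega) (by omega) with h | h
            · exfalso
              have e2 : csN N (List.idxOf (n+1) π) = List.idxOf n π := by
                rw [ih1, ih2, Gfun_step hi0lt (by omega) (by omega)]
              have e3 : List.idxOf (n+2) π = List.idxOf n π := by
                rw [h, e2]
              have := hinj (n+2) n (by omega) (by omega) (by omega) (by omega) e3
              omega
            · have e2 : csN N (List.idxOf (n+2) π) = csN N (Gfun N i0 (n+2)) := by
                rw [← h, ih2, Gfun_step hi0lt (by omega) (by omega)]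
              exact csN_inj (hidxlt (n+2) (by omega) (by omega))
                (Gfun_lt hi0lt (by omega) (by omega)) e2
      have keyall : ∀ v, 1 ≤ v → v ≤ N → List.idxOf v π = Gfun N i0 v := by
        intro v h1 h2
        rcases Nat.lt_or_ge v N with h | h
        · exact (key v h1 (by omega)).1
        · obtain ⟨w, rfl⟩ : ∃ w, v = w + 1 := ⟨v - 1, by omega⟩
          exact (key w (by omega) (by omega)).2
      refine ⟨N - 1 - i0, ?_⟩
      apply List.ext_getElem (by simp [hlen])
      intro p h1 h2
      have hpN : p < N := by omega
      set v := if p ≤ i0 then i0 - p + 1 else i0 + N - p + 1 with hv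
      have hv1 : 1 ≤ v := by rw [hv]; split_ifs <;> omega
      have hv2 : v ≤ N := by rw [hv]; split_ifs <;> omega
      have hGv : Gfun N i0 v = p := by
        rw [hv]; unfold Gfun; split_ifs <;> omega
      have hidxv : List.idxOf v π = p := by rw [keyall v hv1 hv2, hGv]
      have hgetp : π[p]'h1 = v := by
        have hg := hget v hv1 hv2
        simp only [hidxv] at hg
        exact hg
      rw [hgetp, List.getElem_rotate]
      simp only [List.length_reverse, List.length_range']
      rw [List.getElem_reverse]
      simp only [List.length_range']
      rw [List.getElem_range']
      have hm := mod2' (a := p + (N - 1 - i0)) (N := N) (by omega)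
      rw [hm, hv]
      split_ifs <;> omega
  · -- easy direction
    rintro (⟨m, rfl⟩ | ⟨m, rfl⟩) A hA B hB hpat <;>
      simp only [Set.mem_setOf_eq] at hA hB <;>
      obtain ⟨a, b, c, d, hsub, ha, hb, hc, hd⟩ := quad_of_formPattern hpat
    · rcases cyclic4 hsub with h | h | h | h
      · exact core_circ hA hB h.1 h.2.1 h.2.2 ha hb hc hd
      · exact core_circ hB hA h.1 h.2.1 h.2.2 hb hc hd ha
      · exact core_circ hA hB h.1 h.2.1 h.2.2 hc hd ha hb
      · exact core_circ hB hA h.1 h.2.1 h.2.2 hd ha hb hc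
    · have hrev : [d,c,b,a].Sublist
          ((List.range' 1 N).rotate
            ((List.range' 1 N).reverse.length - m % (List.range' 1 N).reverse.length)) := by
        have h2 := hsub.reverse
        rw [List.reverse_rotate, List.reverse_reverse] at h2
        simpa using h2
      rcases cyclic4 hrev with h | h | h | h
      · exact core_circ hB hA h.1 h.2.1 h.2.2 hd hc hb ha
      · exact core_circ hA hB h.1 h.2.1 h.2.2 hc hb ha hd
      · exact core_circ hB hA h.1 h.2.1 h.2.2 hb ha hd hc
      · exact core_circ hA hB h.1 h.2.1 h.2.2 ha hd hc hb
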